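/- arXiv:1905.09592 — 6 statements merged into one kernel-verified Lean document; each statement's English description precedes it below -/
import Mathlib

section
/- Let (n_k) be a strictly increasing sequence of positive integers with n_0 = 1 and n_{k+1} ≤ c·n_k for all k, where c > 1 is a real constant. Then for every λ on the unit circle with λ ≠ 1, there exists k ≥ 0 such that |λ^{n_k} - 1| ≥ 2·sin(π/(c+1)). -/
open Complex Real

-- |e^{ix} - 1| = 2|sin(x/2)|
lemma abs_exp_mul_I_sub_one (x : ℝ) :
    ‖Complex.exp ((x:ℂ) * Complex.I) - 1‖ = 2 * |Real.sin (x / 2)| := by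
  have h : Complex.exp ((x:ℂ) * Complex.I) = Complex.cos x + Complex.sin x * Complex.I :=
    Complex.exp_mul_I (x:ℂ)
  have hc : Real.cos x = 1 - 2 * Real.sin (x/2)^2 := by
    have h2 : Real.cos (2 * (x/2)) = 2 * Real.cos (x/2)^2 - 1 := Real.cos_two_mul (x/2)
    have h3 : 2 * (x/2) = x := by ring
    rw [h3] at h2
    nlinarith [Real.sin_sq_add_cos_sq (x/2)]
  have hsq : (‖Complex.exp ((x:ℂ) * Complex.I) - 1‖)^2 = (2 * |Real.sin (x / 2)|)^2 := by
    rw [← Complex.normSq_eq_norm_sq, h, Complex.normSq_apply]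
    simp [Complex.cos_ofReal_re, Complex.sin_ofReal_re]
    nlinarith [Real.sin_sq_add_cos_sq x, _root_.sq_abs (Real.sin (x/2))]
  have h1 := norm_nonneg (Complex.exp ((x:ℂ) * Complex.I) - 1)
  have h2 : (0:ℝ) ≤ 2 * |Real.sin (x / 2)| := by positivity
  nlinarith

-- |sin(π x)| = sin(π |x - round x|)
lemma abs_sin_pi_eq (x : ℝ) :
    |Real.sin (Real.pi * x)| = Real.sin (Real.pi * |x - round x|) := by
  set m := round x with hm
  have h1 : Real.pi * x = Real.pi * (x - m) + m * Real.pi := by ring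
  have h2 : |((-1:ℝ))^m| = 1 := by
    rcases Int.even_or_odd m with h | h
    · rw [h.neg_one_zpow]; norm_num
    · rw [Odd.neg_one_zpow h]; norm_num
  rw [h1, Real.sin_add_int_mul_pi, abs_mul, h2, one_mul]
  rcases abs_cases (x - (m:ℝ)) with ⟨he, _⟩ | ⟨he, hneg⟩
  · rw [he]
    exact abs_of_nonneg (Real.sin_nonneg_of_nonneg_of_le_pi
      (by positivity)
      (by nlinarith [abs_sub_round x, Real.pi_pos, he ▸ le_abs_self (x - (m:ℝ))]))
  · have h3 : Real.pi * (x - m) = -(Real.pi * |x - m|) := by rw [he]; ring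
    rw [h3, Real.sin_neg, abs_neg]
    exact abs_of_nonneg (Real.sin_nonneg_of_nonneg_of_le_pi
      (by positivity)
      (by nlinarith [abs_sub_round x, Real.pi_pos]))

-- core combinatorial lemma
lemma core (n : ℕ → ℕ) (c : ℝ) (hc : 1 < c) (hmono : StrictMono n) (h0 : n 0 = 1)
    (hq : ∀ k, (n (k + 1) : ℝ) ≤ c * n k) (s : ℝ) (hs : 0 < s) (hs2 : s ≤ 1/2)
    (hbad : ∀ k, |(n k : ℝ) * s - round ((n k : ℝ) * s)| < 1 / (c + 1)) : False := by
  set δ := 1 / (c + 1) with hδdef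
  have hcpos : (0:ℝ) < c + 1 := by linarith
  have hδpos : 0 < δ := by positivity
  have hδhalf : δ < 1/2 := by
    rw [hδdef, div_lt_div_iff₀ hcpos (by norm_num)]; linarith
  have hcδ : c * δ = 1 - δ := by
    rw [hδdef]; field_simp; ring
  have hex : ∃ k, 1 - δ < (n k : ℝ) * s := by
    obtain ⟨k, hk⟩ := exists_nat_gt ((1 - δ) / s)
    refine ⟨k, ?_⟩
    have h1 : (1 - δ) / s < (n k : ℝ) := lt_of_lt_of_le hk (by exact_mod_cast hmono.le_apply)
    calc 1 - δ = (1 - δ)/s * s := by field_simp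
    _ < (n k : ℝ) * s := by exact mul_lt_mul_of_pos_right h1 hs
  classical
  set K := Nat.find hex with hK
  have hKspec : 1 - δ < (n K : ℝ) * s := Nat.find_spec hex
  have hK0 : K ≠ 0 := by
    intro h
    rw [h, h0] at hKspec
    push_cast at hKspec
    linarith
  obtain ⟨j, hj⟩ := Nat.exists_eq_succ_of_ne_zero hK0
  have hjlt : ¬ (1 - δ < (n j : ℝ) * s) := Nat.find_min hex (by omega)
  push_neg at hjlt
  have hjone : (1:ℝ) ≤ (n j : ℝ) := by
    have := hmono.monotone (Nat.zero_le j)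
    rw [h0] at this
    exact_mod_cast this
  have hjsmall : (n j : ℝ) * s < δ := by
    have hb := hbad j
    set x := (n j : ℝ) * s with hx
    set m := round x with hm
    have hxpos : 0 < x := mul_pos (by linarith) hs
    rcases le_or_gt (m : ℝ) 0 with hm0 | hm1
    · have : x - m < δ := (abs_lt.mp hb).2
      linarith
    · have hmz : (0:ℤ) < m := by exact_mod_cast hm1
      have hm1' : (1:ℝ) ≤ (m:ℝ) := by exact_mod_cast hmz
      have : -(δ) < x - m := (abs_lt.mp hb).1
      linarith
  have hstep : (n K : ℝ) * s ≤ c * ((n j : ℝ) * s) := by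
    have := hq j
    rw [hj]
    calc (n (j+1) : ℝ) * s ≤ (c * n j) * s := mul_le_mul_of_nonneg_right this hs.le
    _ = c * ((n j : ℝ) * s) := by ring
  have hlt : (n K : ℝ) * s < c * δ := lt_of_le_of_lt hstep (by nlinarith)
  rw [hcδ] at hlt
  linarith

theorem stmt_0 (n : ℕ → ℕ) (c : ℝ) (hc : 1 < c)
    (hmono : StrictMono n) (h0 : n 0 = 1) (hpos : ∀ k, 0 < n k)
    (hq : ∀ k, (n (k + 1) : ℝ) ≤ c * n k)
    (lam : ℂ) (hlam : ‖lam‖ = 1) (hne : lam ≠ 1) :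
    ∃ k : ℕ, 2 * Real.sin (Real.pi / (c + 1)) ≤ ‖lam ^ n k - 1‖ := by
  classical
  have hcpos : (0:ℝ) < c + 1 := by linarith
  set θ := Complex.arg lam with hθ
  have hlamexp : lam = Complex.exp ((θ:ℂ) * Complex.I) := by
    conv_lhs => rw [← Complex.norm_mul_exp_arg_mul_I lam]
    rw [hlam]; simp [hθ]
  have hθne : θ ≠ 0 := by
    intro h
    apply hne
    rw [hlamexp, h]; simp
  set s := |θ| / (2 * Real.pi) with hs
  have hpi := Real.pi_pos
  have hspos : 0 < s := by
    have : 0 < |θ| := abs_pos.mpr hθne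
    positivity
  have hshalf : s ≤ 1/2 := by
    have h1 : |θ| ≤ Real.pi := Complex.abs_arg_le_pi lam
    rw [hs, div_le_iff₀ (by positivity)]
    linarith
  have key : ∀ m : ℕ, ‖lam ^ m - 1‖ = 2 * |Real.sin (Real.pi * ((m:ℝ) * s))| := by
    intro m
    have h1 : lam ^ m = Complex.exp ((((m:ℝ) * θ : ℝ) : ℂ) * Complex.I) := by
      rw [hlamexp, ← Complex.exp_nat_mul]
      push_cast; ring_nf
    rw [h1, abs_exp_mul_I_sub_one]
    have hpne := Real.pi_ne_zero
    have harg : Real.pi * ((m:ℝ) * s) = (m:ℝ) * |θ| / 2 := by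
      rw [hs]; field_simp
    rw [harg]
    rcases abs_cases θ with ⟨he, _⟩ | ⟨he, _⟩
    · rw [he]
    · rw [he]
      congr 1
      rw [show (m:ℝ) * -θ / 2 = -((m:ℝ) * θ / 2) by ring, Real.sin_neg, abs_neg]
  by_contra hcon
  push_neg at hcon
  apply core n c hc hmono h0 hq s hspos hshalf
  intro k
  by_contra hbig
  push_neg at hbig
  have hfrac : 0 < Real.pi / (c+1) := by positivity
  have hd2 : |(n k : ℝ) * s - round ((n k : ℝ) * s)| ≤ 1/2 := abs_sub_round _
  have habs : 0 ≤ Real.pi * |(n k : ℝ) * s - round ((n k : ℝ) * s)| := by positivity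
  have hsin : Real.sin (Real.pi / (c+1)) ≤ Real.sin (Real.pi * |(n k : ℝ) * s - round ((n k : ℝ) * s)|) := by
    apply Real.strictMonoOn_sin.monotoneOn
    · constructor
      · linarith
      · rw [div_le_div_iff₀ hcpos (by norm_num)]; nlinarith
    · constructor
      · linarith
      · nlinarith
    · calc Real.pi / (c+1) = Real.pi * (1/(c+1)) := by ring
      _ ≤ Real.pi * |(n k : ℝ) * s - round ((n k : ℝ) * s)| :=
        mul_le_mul_of_nonneg_left hbig hpi.le
  have hck := hcon k
  rw [key (n k), abs_sin_pi_eq ((n k : ℝ) * s)] at hck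
  linarith
end

section
/- Let (n_k) be a sequence of positive integers with n_0 = 1 such that every unimodular λ with sup_{k≥0} |λ^{n_k} - 1| ≤ √2 satisfies λ = 1. Then every nonzero complex number c with Re(c^{n_k}) ≥ 0 for all k ≥ 0 is a nonnegative real number. -/
theorem stmt_8 (n : ℕ → ℕ) (h0 : n 0 = 1) (hpos : ∀ k, 0 < n k)
    (hJ : ∀ lam : ℂ, ‖lam‖ = 1 →
      (∀ k : ℕ, ‖lam ^ n k - 1‖ ≤ Real.sqrt 2) → lam = 1)
    (c : ℂ) (hc : c ≠ 0) (h : ∀ k : ℕ, 0 ≤ (c ^ n k).re) :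
    ∃ r : ℝ, 0 ≤ r ∧ c = (r : ℂ) := by
  set a : ℝ := ‖c‖ with ha
  have ha0 : 0 < a := by rw [ha]; exact norm_pos_iff.mpr hc
  set lam : ℂ := c / (a : ℂ) with hlam
  have habs : ‖lam‖ = 1 := by
    rw [hlam, norm_div, Complex.norm_real, Real.norm_eq_abs, abs_of_pos ha0, div_self (ne_of_gt ha0)]
  have hre : ∀ k, 0 ≤ (lam ^ n k).re := by
    intro k
    have : lam ^ n k = c ^ n k / ((a ^ n k : ℝ) : ℂ) := by
      rw [hlam, div_pow]; push_cast; ring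
    rw [this, Complex.div_ofReal_re]
    exact div_nonneg (h k) (by positivity)
  have hkey : ∀ k : ℕ, ‖lam ^ n k - 1‖ ≤ Real.sqrt 2 := by
    intro k
    set z := lam ^ n k with hz
    have hnz : Complex.normSq z = 1 := by
      have : ‖z‖ = 1 := by rw [hz, norm_pow, habs, one_pow]
      rw [← Complex.sq_norm, this, one_pow]
    have hsq : Complex.normSq (z - 1) ≤ 2 := by
      have h1 := hre k
      have : Complex.normSq (z - 1) = Complex.normSq z - 2 * z.re + 1 := by
        simp [Complex.normSq_apply, Complex.sub_re, Complex.sub_im]; ring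
      rw [this, hnz]; linarith
    calc ‖z - 1‖ = Real.sqrt (Complex.normSq (z - 1)) :=
          Complex.norm_def _
      _ ≤ Real.sqrt 2 := Real.sqrt_le_sqrt hsq
  have : lam = 1 := hJ lam habs hkey
  refine ⟨a, le_of_lt ha0, ?_⟩
  rw [hlam] at this
  have hane : (a : ℂ) ≠ 0 := by exact_mod_cast ne_of_gt ha0
  field_simp at this
  rw [this]
end

section
/- For the sequence m_k defined by m_0 = 1, m_1 = 3, and m_k = 2^k for k ≥ 2: every unimodular λ with sup_{k≥0} |λ^{m_k} - 1| < √2 satisfies λ = 1, and moreover sup_{k≥0} |i^{m_k} - 1| = √2, so √2 is the Jamison constant of (m_k). -/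
theorem stmt_9 (m : ℕ → ℕ) (hm0 : m 0 = 1) (hm1 : m 1 = 3)
    (hm : ∀ k, 2 ≤ k → m k = 2 ^ k)
    (h2k : ∀ lam : ℂ, ‖lam‖ = 1 →
      (∀ k : ℕ, ‖lam ^ 2 ^ k - 1‖ < Real.sqrt 3) → lam = 1) :
    (∀ lam : ℂ, ‖lam‖ = 1 →
      (∀ k : ℕ, ‖lam ^ m k - 1‖ < Real.sqrt 2) → lam = 1) ∧
    (⨆ k : ℕ, ‖Complex.I ^ m k - 1‖) = Real.sqrt 2 := by
  have hsqrt23 : Real.sqrt 2 < Real.sqrt 3 := by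
    apply Real.sqrt_lt_sqrt <;> norm_num
  have habsI1 : ‖Complex.I - 1‖ = Real.sqrt 2 := by
    simp [Complex.norm_def, Complex.normSq_apply, Complex.sub_re, Complex.sub_im]
    norm_num
  have habsnI1 : ‖-Complex.I - 1‖ = Real.sqrt 2 := by
    simp [Complex.norm_def, Complex.normSq_apply, Complex.sub_re, Complex.sub_im]
    norm_num
  constructor
  · intro lam hl hs
    have h4 : lam ^ 4 = 1 := by
      apply h2k (lam ^ 4) (by simp [map_pow, hl])
      intro k
      have hmk : m (k + 2) = 2 ^ (k + 2) := hm (k + 2) (by omega)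
      have hpow : (lam ^ 4) ^ 2 ^ k = lam ^ m (k + 2) := by
        rw [hmk, ← pow_mul]
        congr 1
        ring
      rw [hpow]
      exact lt_trans (hs (k + 2)) hsqrt23
    have h1 : ‖lam - 1‖ < Real.sqrt 2 := by
      have := hs 0; rwa [hm0, pow_one] at this
    have key : (lam - 1) * (lam + 1) * (lam - Complex.I) * (lam + Complex.I) = 0 := by
      have : (lam - 1) * (lam + 1) * (lam - Complex.I) * (lam + Complex.I)
          = lam ^ 4 - 1 := by
        linear_combination (1 - lam ^ 2) * Complex.I_sq
      rw [this, h4, sub_self]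
    have hs2 : (0:ℝ) < Real.sqrt 2 := Real.sqrt_pos.mpr (by norm_num)
    have h2lt : Real.sqrt 2 < 2 := by
      nlinarith [Real.sq_sqrt (by norm_num : (0:ℝ) ≤ 2)]
    rcases mul_eq_zero.mp key with h | h
    · rcases mul_eq_zero.mp h with h | h
      · rcases mul_eq_zero.mp h with h | h
        · exact sub_eq_zero.mp h
        · exfalso
          have : lam = -1 := by linear_combination h
          rw [this] at h1
          have : ‖(-1 - 1 : ℂ)‖ = 2 := by norm_num
          rw [this] at h1; linarith
      · exfalso
        have : lam = Complex.I := sub_eq_zero.mp h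
        rw [this, habsI1] at h1
        exact lt_irrefl _ h1
    · exfalso
      have : lam = -Complex.I := by linear_combination h
      rw [this, habsnI1] at h1
      exact lt_irrefl _ h1
  · have hub : ∀ k : ℕ, ‖Complex.I ^ m k - 1‖ ≤ Real.sqrt 2 := by
      intro k
      match k with
      | 0 => rw [hm0, pow_one, habsI1]
      | 1 =>
        rw [hm1]
        have : Complex.I ^ 3 = -Complex.I := by
          rw [pow_succ, Complex.I_sq]; ring
        rw [this, habsnI1]
      | (n + 2) =>
        have : Complex.I ^ m (n + 2) = 1 := by
          rw [hm (n + 2) (by omega)]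
          have : (2:ℕ) ^ (n + 2) = 4 * 2 ^ n := by ring
          rw [this, pow_mul, Complex.I_pow_four, one_pow]
        rw [this, sub_self, norm_zero]
        exact le_of_lt (Real.sqrt_pos.mpr (by norm_num))
    apply le_antisymm
    · exact ciSup_le hub
    · have hb : BddAbove (Set.range fun k => ‖Complex.I ^ m k - 1‖) :=
        ⟨Real.sqrt 2, by rintro x ⟨k, rfl⟩; exact hub k⟩
      have h0 : ‖Complex.I ^ m 0 - 1‖ = Real.sqrt 2 := by
        rw [hm0, pow_one, habsI1]
      calc Real.sqrt 2 = ‖Complex.I ^ m 0 - 1‖ := h0.symm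
        _ ≤ _ := le_ciSup hb 0
end

section
/- Let G be a metrizable topological group with left-invariant metric d, constants a > 0 and K ≥ 1, satisfying the weak Gleason property: if max{d(g^i, e) : 1 ≤ i ≤ n} < a then n·d(g,e) ≤ K·d(g^n, e). Let b > 0 and h ∈ G with max{d(h^i,e) : 1 ≤ i ≤ n} < a and d(h^n, e) < b. Then max{d(h^i,e) : 1 ≤ i ≤ n} ≤ min(a, K·b). -/
theorem stmt_14 {G : Type*} [Group G] [MetricSpace G]
    (hinv : ∀ h g f : G, dist (h * g) (h * f) = dist g f)
    (a K : ℝ) (ha : 0 < a) (hK : 1 ≤ K)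
    (gleason : ∀ (g : G) (n : ℕ), 0 < n →
      (∀ i : ℕ, 1 ≤ i → i ≤ n → dist (g ^ i) 1 < a) →
      (n : ℝ) * dist g 1 ≤ K * dist (g ^ n) 1)
    (b : ℝ) (hb : 0 < b) (h : G) (n : ℕ) (hn : 0 < n)
    (hsmall : ∀ i : ℕ, 1 ≤ i → i ≤ n → dist (h ^ i) 1 < a)
    (hend : dist (h ^ n) 1 < b) :
    ∀ i : ℕ, 1 ≤ i → i ≤ n → dist (h ^ i) 1 ≤ min a (K * b) := by
  have key : ∀ i : ℕ, dist (h ^ i) 1 ≤ (i : ℝ) * dist h 1 := by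
    intro i
    induction i with
    | zero => simp
    | succ k ih =>
      have h1 : dist (h ^ (k + 1)) (h ^ k) = dist h 1 := by
        have := hinv (h ^ k) h 1
        simpa [pow_succ, mul_comm] using this
      calc dist (h ^ (k + 1)) 1 ≤ dist (h ^ (k + 1)) (h ^ k) + dist (h ^ k) 1 :=
            dist_triangle _ _ _
        _ = dist h 1 + dist (h ^ k) 1 := by rw [h1]
        _ ≤ dist h 1 + (k : ℝ) * dist h 1 := by linarith
        _ = ((k + 1 : ℕ) : ℝ) * dist h 1 := by push_cast; ring
  have hd : (n : ℝ) * dist h 1 ≤ K * b := by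
    have := gleason h n hn hsmall
    nlinarith [dist_nonneg (x := h ^ n) (y := (1 : G)), hK]
  intro i hi1 hin
  refine le_min (le_of_lt (hsmall i hi1 hin)) ?_
  calc dist (h ^ i) 1 ≤ (i : ℝ) * dist h 1 := key i
    _ ≤ (n : ℝ) * dist h 1 := by
        have : (i : ℝ) ≤ (n : ℝ) := by exact_mod_cast hin
        nlinarith [dist_nonneg (x := h) (y := (1 : G))]
    _ ≤ K * b := hd
end

section
/- Let M be an n×n complex matrix such that sup_{p≥1} ‖M^p - I‖ < 1 in the operator norm. Then M = I. -/
set_option maxHeartbeats 1000000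
set_option synthInstance.maxHeartbeats 400000


theorem stmt_17 (n : ℕ) (M : Matrix (Fin n) (Fin n) ℂ)
    (C : ℝ) (hC : C < 1)
    (h : ∀ p : ℕ, 1 ≤ p → ‖Matrix.toEuclideanCLM (𝕜 := ℂ) (n := Fin n) (M ^ p - 1)‖ ≤ C) :
    M = 1 := by
  set φ := Matrix.toEuclideanCLM (𝕜 := ℂ) (n := Fin n) with hφ
  set T := φ M with hT
  have h' : ∀ p : ℕ, 1 ≤ p → ‖T ^ p - 1‖ ≤ C := by
    intro p hp
    have := h p hp
    rwa [map_sub, map_pow, map_one] at this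
  have hC0 : 0 ≤ C := le_trans (norm_nonneg _) (h' 1 le_rfl)
  have key : ∀ N : ℕ, 1 ≤ N → (1 - C) * ‖T - 1‖ ≤ C / N := by
    intro N hN
    have hNpos : (0 : ℝ) < N := by exact_mod_cast hN
    have hNC : (N : ℂ) ≠ 0 := by exact_mod_cast hNpos.ne'
    set S := ∑ p ∈ Finset.range N, T ^ p with hS
    have hgeom : (T - 1) * S = T ^ N - 1 := mul_geom_sum T N
    set u := ((N : ℂ))⁻¹ • S with hu
    -- ‖u - 1‖ ≤ C
    have hsum : S - (N : ℂ) • (1 : _) = ∑ p ∈ Finset.range N, (T ^ p - 1) := by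
      rw [Finset.sum_sub_distrib, hS]
      congr 1
      rw [Finset.sum_const, Finset.card_range, ← Algebra.algebraMap_eq_smul_one, map_natCast, nsmul_eq_mul, mul_one]
    have hu1 : ‖u - 1‖ ≤ C := by
      have heq : u - 1 = ((N : ℂ))⁻¹ • (S - (N : ℂ) • (1 : _)) := by
        rw [hu, smul_sub, smul_smul, inv_mul_cancel₀ hNC, one_smul]
      rw [heq, hsum]
      have hb : ‖∑ p ∈ Finset.range N, (T ^ p - 1)‖ ≤ N * C := by
        refine le_trans (norm_sum_le _ _) ?_
        have : ∀ p ∈ Finset.range N, ‖T ^ p - 1‖ ≤ C := by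
          intro p _
          rcases Nat.eq_zero_or_pos p with rfl | hp
          · simpa using hC0
          · exact h' p hp
        calc ∑ p ∈ Finset.range N, ‖T ^ p - 1‖ ≤ ∑ _p ∈ Finset.range N, C :=
              Finset.sum_le_sum this
          _ = N * C := by simp [mul_comm]
      refine le_trans (ContinuousLinearMap.opNorm_smul_le _ _) ?_
      have h1 : ‖((N : ℂ))⁻¹‖ = (N : ℝ)⁻¹ := by simp
      rw [h1]
      calc (N : ℝ)⁻¹ * ‖∑ p ∈ Finset.range N, (T ^ p - 1)‖
          ≤ (N : ℝ)⁻¹ * (N * C) := by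
            exact mul_le_mul_of_nonneg_left hb (by positivity)
        _ = C := by field_simp
    -- ‖(T-1) * u‖ ≤ C / N
    have hmul : ‖(T - 1) * u‖ ≤ C / N := by
      have : (T - 1) * u = ((N : ℂ))⁻¹ • (T ^ N - 1) := by
        rw [hu, mul_smul_comm, hgeom]
      rw [this]
      refine le_trans (ContinuousLinearMap.opNorm_smul_le _ _) ?_
      have h1 : ‖((N : ℂ))⁻¹‖ = (N : ℝ)⁻¹ := by simp
      rw [h1, div_eq_inv_mul]
      exact mul_le_mul_of_nonneg_left (h' N hN) (by positivity)
    -- combine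
    have hsplit : ‖T - 1‖ ≤ ‖(T - 1) * u‖ + ‖T - 1‖ * C := by
      have : T - 1 = (T - 1) * u + (T - 1) * (1 - u) := by
        rw [← mul_add, add_sub_cancel, mul_one]
      calc ‖T - 1‖ = ‖(T - 1) * u + (T - 1) * (1 - u)‖ := by rw [← this]
        _ ≤ ‖(T - 1) * u‖ + ‖(T - 1) * (1 - u)‖ := norm_add_le _ _
        _ ≤ ‖(T - 1) * u‖ + ‖T - 1‖ * ‖1 - u‖ := by
            gcongr; exact norm_mul_le _ _
        _ ≤ ‖(T - 1) * u‖ + ‖T - 1‖ * C := by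
            gcongr
            rw [← norm_neg]; simpa using hu1
    nlinarith [norm_nonneg (T - 1)]
  -- conclude ‖T - 1‖ = 0
  have hT1 : T = 1 := by
    by_contra hne
    have hpos : 0 < ‖T - 1‖ := by
      rw [norm_pos_iff, sub_ne_zero]; exact hne
    have h1C : 0 < 1 - C := by linarith
    obtain ⟨N, hNgt⟩ := exists_nat_gt (C / ((1 - C) * ‖T - 1‖))
    have hN1 : 1 ≤ N := by
      by_contra hc
      push_neg at hc
      interval_cases N
      have : 0 ≤ C / ((1 - C) * ‖T - 1‖) := by positivity
      simp at hNgt; linarith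
    have := key N hN1
    have hNpos : (0 : ℝ) < N := by exact_mod_cast hN1
    rw [div_lt_iff₀ (by positivity)] at hNgt
    rw [le_div_iff₀ hNpos] at this
    nlinarith
  have : φ M = φ 1 := by rw [map_one]; exact hT1
  exact φ.injective this
end

section
/- Let X be a complex Banach space and (T_t)_{t≥0} a C₀-semigroup of bounded operators on X such that sup_{t≥0} ‖T_t - I‖ < 1 and T_1 = I. Then T_t = I for every t ≥ 0. -/
private lemma aux_unit_18 {X : Type*} [NormedAddCommGroup X] [NormedSpace ℂ X] [CompleteSpace X]
    (A : X →L[ℂ] X) (q : ℕ) (hq : 0 < q) (C : ℝ) (hC : C < 1)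
    (hpow : ∀ k : ℕ, ‖A ^ k - 1‖ ≤ C) (hAq : A ^ q = 1) : A = 1 := by
  set S : X →L[ℂ] X := ∑ k ∈ Finset.range q, A ^ k with hS
  have hSA : S * A = S := by
    have h1 : S * A = ∑ k ∈ Finset.range q, A ^ (k + 1) := by
      rw [hS, Finset.sum_mul]
      exact Finset.sum_congr rfl fun k _ => (pow_succ A k).symm
    have h2 : (∑ k ∈ Finset.range (q + 1), A ^ k) = (∑ k ∈ Finset.range q, A ^ (k + 1)) + A ^ 0 :=
      Finset.sum_range_succ' _ q
    have h3 : (∑ k ∈ Finset.range (q + 1), A ^ k) = S + A ^ q := Finset.sum_range_succ _ q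
    rw [h1]
    have := h2.symm.trans h3
    rw [hAq, pow_zero] at this
    exact (add_right_cancel this)
  set M : X →L[ℂ] X := ((q : ℂ))⁻¹ • S with hM
  have hqC : (q : ℂ) ≠ 0 := Nat.cast_ne_zero.mpr hq.ne'
  have hnorm : ‖(1 : X →L[ℂ] X) - M‖ ≤ C := by
    have heq : (1 : X →L[ℂ] X) - M = ((q : ℂ))⁻¹ • (∑ k ∈ Finset.range q, (1 - A ^ k)) := by
      rw [Finset.sum_sub_distrib, smul_sub, hM, Finset.sum_const, Finset.card_range]
      congr 1
      rw [← Nat.cast_smul_eq_nsmul ℂ, smul_smul, inv_mul_cancel₀ hqC, one_smul]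
    rw [heq]
    have hns := norm_smul ((q:ℂ)⁻¹) (∑ k ∈ Finset.range q, ((1:X →L[ℂ] X) - A ^ k))
    rw [hns]
    have hb : ‖∑ k ∈ Finset.range q, ((1 : X →L[ℂ] X) - A ^ k)‖ ≤ q * C := by
      calc ‖∑ k ∈ Finset.range q, ((1 : X →L[ℂ] X) - A ^ k)‖
          ≤ ∑ k ∈ Finset.range q, ‖(1 : X →L[ℂ] X) - A ^ k‖ := norm_sum_le _ _
        _ ≤ ∑ _k ∈ Finset.range q, C := by
            refine Finset.sum_le_sum fun k _ => ?_
            rw [norm_sub_rev]; exact hpow k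
        _ = q * C := by rw [Finset.sum_const, Finset.card_range, nsmul_eq_mul]
    have hqn : ‖((q : ℂ))⁻¹‖ = (q : ℝ)⁻¹ := by
      simp
    rw [hqn]
    show (q : ℝ)⁻¹ * ‖∑ k ∈ Finset.range q, ((1 : X →L[ℂ] X) - A ^ k)‖ ≤ C
    calc (q : ℝ)⁻¹ * ‖∑ k ∈ Finset.range q, ((1 : X →L[ℂ] X) - A ^ k)‖
        ≤ (q : ℝ)⁻¹ * (q * C) := by
          apply mul_le_mul_of_nonneg_left hb (by positivity)
      _ = C := by
          field_simp
  have hMunit : IsUnit M := by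
    have h := (Units.oneSub ((1 : X →L[ℂ] X) - M) (lt_of_le_of_lt hnorm hC)).isUnit
    simpa using h
  have hMA : M * A = M := by
    rw [hM, smul_mul_assoc, hSA]
  exact hMunit.mul_left_cancel (by rw [mul_one, hMA])

theorem stmt_18 {X : Type*} [NormedAddCommGroup X] [NormedSpace ℂ X] [CompleteSpace X]
    (T : ℝ → X →L[ℂ] X) (hT0 : T 0 = 1)
    (hmul : ∀ s t : ℝ, 0 ≤ s → 0 ≤ t → T (s + t) = T s * T t)
    (hcont : ∀ x : X, ContinuousOn (fun t => T t x) (Set.Ici (0 : ℝ)))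
    (C : ℝ) (hC : C < 1) (hbdd : ∀ t : ℝ, 0 ≤ t → ‖T t - 1‖ ≤ C)
    (h1 : T 1 = 1) :
    ∀ t : ℝ, 0 ≤ t → T t = 1 := by
  -- T (k * t) = (T t) ^ k
  have hpow : ∀ (t : ℝ), 0 ≤ t → ∀ k : ℕ, T (k * t) = (T t) ^ k := by
    intro t ht k
    induction k with
    | zero => simpa using hT0
    | succ k ih =>
        have : ((k + 1 : ℕ) : ℝ) * t = (k : ℝ) * t + t := by push_cast; ring
        rw [this, hmul _ _ (by positivity) ht, ih, pow_succ]
  -- T n = 1 for naturals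
  have hnat : ∀ n : ℕ, T (n : ℝ) = 1 := by
    intro n
    have := hpow 1 zero_le_one n
    rw [mul_one] at this
    rw [this, h1, one_pow]
  -- T (p / q) = 1 for naturals p, q with q > 0
  have hrat : ∀ p q : ℕ, 0 < q → T ((p : ℝ) / q) = 1 := by
    intro p q hq
    have hq0 : (0:ℝ) < q := by exact_mod_cast hq
    have ht : (0:ℝ) ≤ (p : ℝ) / q := by positivity
    apply aux_unit_18 (T ((p:ℝ)/q)) q hq C hC
    · intro k
      rw [← hpow _ ht k]
      exact hbdd _ (by positivity)
    · rw [← hpow _ ht q]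
      have : (q : ℝ) * ((p:ℝ)/q) = (p : ℝ) := by field_simp
      rw [this, hnat p]
  -- extend by continuity
  intro t ht
  ext x
  have hseq : ∀ n : ℕ, T ((⌈t * (n+1)⌉₊ : ℝ) / (n+1)) = 1 := by
    intro n
    have := hrat ⌈t * (n+1)⌉₊ (n+1) n.succ_pos
    push_cast at this ⊢
    exact this
  set a : ℕ → ℝ := fun n => (⌈t * (n+1)⌉₊ : ℝ) / (n+1) with ha
  have ha_mem : ∀ n, a n ∈ Set.Ici (0:ℝ) := by
    intro n
    simp only [Set.mem_Ici, ha]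
    positivity
  have ha_tendsto : Filter.Tendsto a Filter.atTop (nhds t) := by
    have hlow : ∀ n : ℕ, t ≤ a n := by
      intro n
      rw [ha]
      rw [le_div_iff₀ (by positivity)]
      exact Nat.le_ceil _
    have hhigh : ∀ n : ℕ, a n ≤ t + 1 / (n+1) := by
      intro n
      rw [ha]
      rw [div_le_iff₀ (by positivity)]
      have h := (Nat.ceil_lt_add_one (by positivity : (0:ℝ) ≤ t * (n+1))).le
      calc (⌈t * (n+1)⌉₊ : ℝ) ≤ t * (n+1) + 1 := h
        _ = (t + 1/(n+1)) * (n+1) := by field_simp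
    have h1' : Filter.Tendsto (fun n : ℕ => t + 1 / ((n:ℝ)+1)) Filter.atTop (nhds (t + 0)) := by
      apply Filter.Tendsto.const_add
      exact tendsto_one_div_add_atTop_nhds_zero_nat
    rw [add_zero] at h1'
    exact tendsto_of_tendsto_of_tendsto_of_le_of_le tendsto_const_nhds h1' hlow hhigh
  have hcw : ContinuousWithinAt (fun s => T s x) (Set.Ici (0:ℝ)) t :=
    (hcont x).continuousWithinAt ht
  have htend : Filter.Tendsto (fun n => T (a n) x) Filter.atTop (nhds (T t x)) := by
    apply hcw.tendsto.comp
    exact Filter.tendsto_inf.mpr ⟨ha_tendsto, Filter.tendsto_principal.mpr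
      (Filter.Eventually.of_forall ha_mem)⟩
  have hconst : ∀ n, T (a n) x = x := by
    intro n
    rw [ha]
    simp only [hseq n]
    rfl
  rw [Filter.tendsto_congr hconst] at htend
  exact tendsto_nhds_unique htend tendsto_const_nhds
end
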